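/- Suppose E[‖ξ(X_1)‖_H²] < ∞ and E[M(X_1)] < ∞, and suppose E[g*(X_1)] > 0 where g*(x) = E[h(X_1, x)] / E[M(X_1)]. Then the LBOW betting fractions converge almost surely: λ_t → λ* := E[g*(X_1)] / (E[g*(X_1)] + E[g*(X_1)²]) as t → ∞, and λ* ∈ (0, 1). -/

import Mathlib

open MeasureTheory ProbabilityTheory Filter
open scoped RealInnerProductSpace Topology

lemma sum_Icc_one {α : Type*} [AddCommMonoid α] (f : ℕ → α) (n : ℕ) :
    ∑ i ∈ Finset.Icc 1 n, f i = ∑ j ∈ Finset.range n, f (1 + j) := by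
  rw [← Finset.Ico_add_one_right_eq_Icc, Finset.sum_Ico_eq_sum_range]
  simp

lemma cesaro_null {f a b : ℕ → ℝ} {L : ℝ} (hb : ∀ i, 0 ≤ b i)
    (hfb : ∀ i, |f i| ≤ a i * b i) (ha : Tendsto a atTop (𝓝 0))
    (hB : Tendsto (fun n : ℕ => (n : ℝ)⁻¹ * ∑ i ∈ Finset.range n, b i) atTop (𝓝 L)) :
    Tendsto (fun n : ℕ => (n : ℝ)⁻¹ * ∑ i ∈ Finset.range n, f i) atTop (𝓝 0) := by
  have hL : 0 ≤ L :=
    le_of_tendsto_of_tendsto' tendsto_const_nhds hB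
      (fun n => mul_nonneg (by positivity) (Finset.sum_nonneg fun i _ => hb i))
  rw [Metric.tendsto_atTop]
  intro ε hε
  have hL1 : (0:ℝ) < L + 1 := by linarith
  set δ : ℝ := ε / (2 * (L + 1)) with hδdef
  have hδ : 0 < δ := by positivity
  obtain ⟨N1, hN1⟩ := (Metric.tendsto_atTop.1 ha) δ hδ
  obtain ⟨N2, hN2⟩ := (Metric.tendsto_atTop.1 hB) 1 one_pos
  set C : ℝ := ∑ i ∈ Finset.range N1, |f i| with hC
  obtain ⟨N3, hN3⟩ :=
    (Metric.tendsto_atTop.1 (tendsto_const_div_atTop_nhds_zero_nat C)) (ε/2) (by positivity)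
  refine ⟨max (max N1 N2) (max N3 1), fun n hn => ?_⟩
  have hnN1 : N1 ≤ n := le_trans (le_trans (le_max_left _ _) (le_max_left _ _)) hn
  have hnN2 : N2 ≤ n := le_trans (le_trans (le_max_right _ _) (le_max_left _ _)) hn
  have hnN3 : N3 ≤ n := le_trans (le_trans (le_max_left _ _) (le_max_right _ _)) hn
  have hn1 : 1 ≤ n := le_trans (le_trans (le_max_right _ _) (le_max_right _ _)) hn
  have hnpos : (0:ℝ) < n := by exact_mod_cast hn1
  -- bound on sum of |f|
  have hsplit : ∑ i ∈ Finset.range n, |f i|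
      = C + ∑ i ∈ Finset.Ico N1 n, |f i| := by
    rw [hC]
    exact (Finset.sum_range_add_sum_Ico _ hnN1).symm
  have htail : ∑ i ∈ Finset.Ico N1 n, |f i| ≤ δ * ∑ i ∈ Finset.range n, b i := by
    calc ∑ i ∈ Finset.Ico N1 n, |f i| ≤ ∑ i ∈ Finset.Ico N1 n, δ * b i := by
          refine Finset.sum_le_sum fun i hi => ?_
          have hai : |a i| < δ := by
            have := hN1 i (Finset.mem_Ico.1 hi).1
            rwa [Real.dist_eq, sub_zero] at this
          calc |f i| ≤ a i * b i := hfb i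
            _ ≤ |a i| * b i := mul_le_mul_of_nonneg_right (le_abs_self _) (hb i)
            _ ≤ δ * b i := mul_le_mul_of_nonneg_right hai.le (hb i)
      _ = δ * ∑ i ∈ Finset.Ico N1 n, b i := by rw [Finset.mul_sum]
      _ ≤ δ * ∑ i ∈ Finset.range n, b i := by
          refine mul_le_mul_of_nonneg_left ?_ hδ.le
          rw [Finset.range_eq_Ico]
          exact Finset.sum_le_sum_of_subset_of_nonneg
            (Finset.Ico_subset_Ico (Nat.zero_le _) le_rfl) (fun i _ _ => hb i)
  have havgb : (n : ℝ)⁻¹ * ∑ i ∈ Finset.range n, b i < L + 1 := by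
    have := hN2 n hnN2
    rw [Real.dist_eq] at this
    have := abs_lt.1 this
    linarith [this.2]
  have hCn : C / n < ε / 2 := by
    have := hN3 n hnN3
    rw [Real.dist_eq, sub_zero] at this
    calc C / n ≤ |C / n| := le_abs_self _
      _ < ε / 2 := this
  have key : |(n : ℝ)⁻¹ * ∑ i ∈ Finset.range n, f i|
      ≤ (n : ℝ)⁻¹ * ∑ i ∈ Finset.range n, |f i| := by
    rw [abs_mul, abs_of_nonneg (by positivity : (0:ℝ) ≤ (n:ℝ)⁻¹)]
    exact mul_le_mul_of_nonneg_left (Finset.abs_sum_le_sum_abs _ _) (by positivity)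
  rw [Real.dist_eq, sub_zero]
  have hδL : δ * (L + 1) = ε / 2 := by
    rw [hδdef]; field_simp
  calc |(n : ℝ)⁻¹ * ∑ i ∈ Finset.range n, f i|
      ≤ (n : ℝ)⁻¹ * ∑ i ∈ Finset.range n, |f i| := key
    _ ≤ (n : ℝ)⁻¹ * (C + δ * ∑ i ∈ Finset.range n, b i) := by
        refine mul_le_mul_of_nonneg_left ?_ (by positivity)
        rw [hsplit]; linarith [htail]
    _ = C / n + δ * ((n : ℝ)⁻¹ * ∑ i ∈ Finset.range n, b i) := by
        rw [mul_add, div_eq_inv_mul]; ring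
    _ < ε / 2 + δ * (L + 1) := by
        refine add_lt_add_of_lt_of_le hCn ?_
        refine mul_le_mul_of_nonneg_left ?_ hδ.le
        exact havgb.le
    _ = ε := by rw [hδL]; ring

lemma lbow_det {H : Type*} [NormedAddCommGroup H] [InnerProductSpace ℝ H]
    (u : ℕ → H) (mm : ℕ → ℝ) (hmm : ∀ i, 0 < mm i)
    (μH : H) (m s v q : ℝ) (hm : 0 < m)
    (h1 : Tendsto (fun n : ℕ => (n : ℝ)⁻¹ • ∑ i ∈ Finset.range n, u i) atTop (𝓝 μH))
    (h2 : Tendsto (fun n : ℕ => (n : ℝ)⁻¹ * ∑ i ∈ Finset.range n, mm i) atTop (𝓝 m))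
    (h3 : Tendsto (fun n : ℕ => (n : ℝ)⁻¹ * ∑ i ∈ Finset.range n, (1 + ‖u i‖ ^ 2)) atTop (𝓝 q))
    (h4 : Tendsto (fun n : ℕ => (n : ℝ)⁻¹ * ∑ i ∈ Finset.range n, ⟪μH, u i⟫ / m) atTop (𝓝 s))
    (h5 : Tendsto (fun n : ℕ => (n : ℝ)⁻¹ * ∑ i ∈ Finset.range n, (⟪μH, u i⟫ / m) ^ 2)
      atTop (𝓝 v)) :
    Tendsto (fun n : ℕ => (n : ℝ)⁻¹ * ∑ j ∈ Finset.range n,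
        (∑ k ∈ Finset.range j, ⟪u k, u j⟫) / (∑ k ∈ Finset.range j, mm k)) atTop (𝓝 s) ∧
    Tendsto (fun n : ℕ => (n : ℝ)⁻¹ * ∑ j ∈ Finset.range n,
        ((∑ k ∈ Finset.range j, ⟪u k, u j⟫) / (∑ k ∈ Finset.range j, mm k)) ^ 2)
      atTop (𝓝 v) := by
  classical
  set c : H := m⁻¹ • μH with hc
  set r : ℕ → H := fun j => (∑ k ∈ Finset.range j, mm k)⁻¹ • ∑ k ∈ Finset.range j, u k with hrdef
  -- r j → c
  have hr : Tendsto r atTop (𝓝 c) := by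
    have base := (h2.inv₀ hm.ne').smul h1
    refine base.congr' ?_
    filter_upwards [eventually_ge_atTop 1] with n hn
    have hnne : (n : ℝ) ≠ 0 := by positivity
    have hBpos : 0 < ∑ k ∈ Finset.range n, mm k :=
      Finset.sum_pos (fun i _ => hmm i) (Finset.nonempty_range_iff.2 (by omega))
    rw [hrdef]
    simp only
    rw [mul_inv, inv_inv, smul_smul]
    congr 1
    field_simp
  have ha : Tendsto (fun j => ‖r j - c‖) atTop (𝓝 0) := by
    have h' : Tendsto (fun j => r j - c) atTop (𝓝 (c - c)) := hr.sub tendsto_const_nhds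
    rw [sub_self] at h'
    simpa using h'.norm
  have ha0 : ∀ j, 0 ≤ ‖r j - c‖ := fun j => norm_nonneg _
  -- inner product formulas
  have hGform : ∀ j, (∑ k ∈ Finset.range j, ⟪u k, u j⟫) / (∑ k ∈ Finset.range j, mm k)
      = ⟪r j, u j⟫ := by
    intro j
    rw [hrdef]
    simp only
    rw [real_inner_smul_left, sum_inner, div_eq_inv_mul]
  have hgsj : ∀ j, ⟪μH, u j⟫ / m = ⟪c, u j⟫ := by
    intro j
    rw [hc, real_inner_smul_left, div_eq_inv_mul]
  have hfj : ∀ j, ⟪r j, u j⟫ - ⟪c, u j⟫ = ⟪r j - c, u j⟫ := by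
    intro j; rw [inner_sub_left]
  have hnorm_le : ∀ j, ‖u j‖ ≤ 1 + ‖u j‖ ^ 2 := by
    intro j
    nlinarith [norm_nonneg (u j), sq_nonneg (‖u j‖ - 1)]
  -- first conclusion
  have hf0 : Tendsto (fun n : ℕ => (n : ℝ)⁻¹ *
      ∑ j ∈ Finset.range n, (⟪r j, u j⟫ - ⟪c, u j⟫)) atTop (𝓝 0) := by
    refine cesaro_null (a := fun j => ‖r j - c‖) (b := fun j => 1 + ‖u j‖ ^ 2)
      (fun i => by positivity) (fun j => ?_) ha h3
    rw [hfj j]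
    calc |⟪r j - c, u j⟫| ≤ ‖r j - c‖ * ‖u j‖ := abs_real_inner_le_norm _ _
      _ ≤ ‖r j - c‖ * (1 + ‖u j‖ ^ 2) :=
          mul_le_mul_of_nonneg_left (hnorm_le j) (ha0 j)
  have key1 : Tendsto (fun n : ℕ => (n : ℝ)⁻¹ * ∑ j ∈ Finset.range n, ⟪r j, u j⟫)
      atTop (𝓝 s) := by
    have h4' : Tendsto (fun n : ℕ => (n : ℝ)⁻¹ * ∑ i ∈ Finset.range n, ⟪c, u i⟫)
        atTop (𝓝 s) := by
      refine h4.congr fun n => ?_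
      congr 1
      exact Finset.sum_congr rfl fun j _ => hgsj j
    have := h4'.add hf0
    rw [add_zero] at this
    refine this.congr fun n => ?_
    rw [← mul_add, ← Finset.sum_add_distrib]
    congr 1
    exact Finset.sum_congr rfl fun j _ => by ring
  -- second conclusion
  have hCc : (0:ℝ) ≤ ‖c‖ := norm_nonneg _
  have ha2 : Tendsto (fun j => ‖r j - c‖ * (2 * ‖c‖ + ‖r j - c‖)) atTop (𝓝 0) := by
    have := ha.mul (tendsto_const_nhds.add ha : Tendsto (fun j => 2 * ‖c‖ + ‖r j - c‖)
      atTop (𝓝 (2 * ‖c‖ + 0)))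
    simpa using this
  have hf20 : Tendsto (fun n : ℕ => (n : ℝ)⁻¹ *
      ∑ j ∈ Finset.range n, (⟪r j, u j⟫ ^ 2 - ⟪c, u j⟫ ^ 2)) atTop (𝓝 0) := by
    refine cesaro_null (a := fun j => ‖r j - c‖ * (2 * ‖c‖ + ‖r j - c‖))
      (b := fun j => 1 + ‖u j‖ ^ 2) (fun i => by positivity) (fun j => ?_) ha2 h3
    have e1 : |⟪r j - c, u j⟫| ≤ ‖r j - c‖ * ‖u j‖ := abs_real_inner_le_norm _ _
    have e2 : |⟪c, u j⟫| ≤ ‖c‖ * ‖u j‖ := abs_real_inner_le_norm _ _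
    have hsplit : ⟪r j, u j⟫ = ⟪r j - c, u j⟫ + ⟪c, u j⟫ := by
      rw [← inner_add_left]; congr 1; abel
    have habs : |⟪r j, u j⟫ ^ 2 - ⟪c, u j⟫ ^ 2|
        ≤ |⟪r j - c, u j⟫| * (|⟪r j - c, u j⟫| + 2 * |⟪c, u j⟫|) := by
      rw [hsplit]
      have : (⟪r j - c, u j⟫ + ⟪c, u j⟫) ^ 2 - ⟪c, u j⟫ ^ 2
          = ⟪r j - c, u j⟫ * (⟪r j - c, u j⟫ + 2 * ⟪c, u j⟫) := by ring
      rw [this, abs_mul]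
      refine mul_le_mul_of_nonneg_left ?_ (abs_nonneg _)
      calc |⟪r j - c, u j⟫ + 2 * ⟪c, u j⟫| ≤ |⟪r j - c, u j⟫| + |2 * ⟪c, u j⟫| := abs_add_le _ _
        _ = |⟪r j - c, u j⟫| + 2 * |⟪c, u j⟫| := by rw [abs_mul, abs_two]
    refine habs.trans ?_
    have hu0 : (0:ℝ) ≤ ‖u j‖ := norm_nonneg _
    have husq : ‖u j‖ ^ 2 ≤ 1 + ‖u j‖ ^ 2 := by linarith
    calc |⟪r j - c, u j⟫| * (|⟪r j - c, u j⟫| + 2 * |⟪c, u j⟫|)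
        ≤ (‖r j - c‖ * ‖u j‖) * (‖r j - c‖ * ‖u j‖ + 2 * (‖c‖ * ‖u j‖)) :=
          mul_le_mul e1 (add_le_add e1 (by linarith)) (by positivity) (by positivity)
      _ = (‖r j - c‖ * (2 * ‖c‖ + ‖r j - c‖)) * ‖u j‖ ^ 2 := by ring
      _ ≤ (‖r j - c‖ * (2 * ‖c‖ + ‖r j - c‖)) * (1 + ‖u j‖ ^ 2) :=
          mul_le_mul_of_nonneg_left husq (by positivity)
  have key2 : Tendsto (fun n : ℕ => (n : ℝ)⁻¹ * ∑ j ∈ Finset.range n, ⟪r j, u j⟫ ^ 2)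
      atTop (𝓝 v) := by
    have h5' : Tendsto (fun n : ℕ => (n : ℝ)⁻¹ * ∑ i ∈ Finset.range n, ⟪c, u i⟫ ^ 2)
        atTop (𝓝 v) := by
      refine h5.congr fun n => ?_
      congr 1
      exact Finset.sum_congr rfl fun j _ => by rw [hgsj j]
    have := h5'.add hf20
    rw [add_zero] at this
    refine this.congr fun n => ?_
    rw [← mul_add, ← Finset.sum_add_distrib]
    congr 1
    exact Finset.sum_congr rfl fun j _ => by ring
  constructor
  · refine key1.congr fun n => ?_
    congr 1
    exact Finset.sum_congr rfl fun j _ => (hGform j).symm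
  · refine key2.congr fun n => ?_
    congr 1
    exact Finset.sum_congr rfl fun j _ => by rw [hGform j]

set_option maxHeartbeats 1000000

/-- Let `(X_t)_{t ≥ 1}` be i.i.d. `𝒳`-valued random variables, `H` a separable real Hilbert
space, `ξ : 𝒳 → H` strongly measurable, and `h(x, y) = ⟪ξ x, ξ y⟫`. Let `M : 𝒳 → (0, ∞)`
be measurable with `h(x, y) ≥ -M(x)` for all `x, y`, and define payoffs
`g_t(x) = (∑_{i=1}^{t-1} h(X_i, x)) / (∑_{i=1}^{t-1} M(X_i))` (so `g_1 = 0`). Let the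
betting fractions follow LBOW: `λ_1 = 0` and `λ_{t+1} = max(0, S_t / (S_t + V_t))` where
`S_t = (1/t) ∑_{i=1}^t g_i(X_i)` and `V_t = (1/t) ∑_{i=1}^t g_i(X_i)²` (with `λ_{t+1} = 0`
when `S_t + V_t = 0`, which is the junk-value convention of real division). If
`E ‖ξ(X₁)‖² < ∞`, `E M(X₁) < ∞`, and `E[g*(X₁)] > 0` where
`g*(x) = E[h(X₁, x)] / E[M(X₁)]`, then almost surely
`λ_t → λ* = E[g*(X₁)] / (E[g*(X₁)] + E[g*(X₁)²])`, and `λ* ∈ (0, 1)`. -/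
theorem lbow_fraction_convergence
    {Ω : Type*} {mΩ : MeasurableSpace Ω} {P : Measure Ω} [IsProbabilityMeasure P]
    {𝒳 : Type*} {m𝒳 : MeasurableSpace 𝒳}
    (X : ℕ → Ω → 𝒳) (hXmeas : ∀ i, Measurable (X i))
    (hXindep : iIndepFun (m := fun _ => m𝒳) X P)
    (hXident : ∀ i, Measure.map (X i) P = Measure.map (X 1) P)
    {H : Type*} [NormedAddCommGroup H] [InnerProductSpace ℝ H] [CompleteSpace H]
    [SecondCountableTopology H]
    (ξ : 𝒳 → H) (hξ : StronglyMeasurable ξ)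
    (M : 𝒳 → ℝ) (hMmeas : Measurable M) (hMpos : ∀ x, 0 < M x)
    (hMbound : ∀ x y, -(M x) ≤ ⟪ξ x, ξ y⟫)
    (g : ℕ → Ω → 𝒳 → ℝ)
    (hg : ∀ t ω x, g t ω x =
      (∑ i ∈ Finset.Icc 1 (t - 1), ⟪ξ (X i ω), ξ x⟫) /
        (∑ i ∈ Finset.Icc 1 (t - 1), M (X i ω)))
    (lam : ℕ → Ω → ℝ)
    (hlam1 : ∀ ω, lam 1 ω = 0)
    (hlam_rec : ∀ t : ℕ, 1 ≤ t → ∀ ω,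
      lam (t + 1) ω = max 0
        (((1 / (t : ℝ)) * ∑ i ∈ Finset.Icc 1 t, g i ω (X i ω)) /
          ((1 / (t : ℝ)) * ∑ i ∈ Finset.Icc 1 t, g i ω (X i ω) +
            (1 / (t : ℝ)) * ∑ i ∈ Finset.Icc 1 t, (g i ω (X i ω)) ^ 2)))
    (hnormsq_int : Integrable (fun ω => ‖ξ (X 1 ω)‖ ^ 2) P)
    (hM_int : Integrable (fun ω => M (X 1 ω)) P)
    (gstar : 𝒳 → ℝ)
    (hgstar : ∀ x, gstar x = (∫ ω, ⟪ξ (X 1 ω), ξ x⟫ ∂P) / ∫ ω, M (X 1 ω) ∂P)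
    (hpos : 0 < ∫ ω, gstar (X 1 ω) ∂P) :
    (∀ᵐ ω ∂P, Tendsto (fun t : ℕ => lam t ω) atTop
        (𝓝 ((∫ ω', gstar (X 1 ω') ∂P) /
          ((∫ ω', gstar (X 1 ω') ∂P) + ∫ ω', (gstar (X 1 ω')) ^ 2 ∂P)))) ∧
      (∫ ω', gstar (X 1 ω') ∂P) /
          ((∫ ω', gstar (X 1 ω') ∂P) + ∫ ω', (gstar (X 1 ω')) ^ 2 ∂P) ∈
        Set.Ioo (0 : ℝ) 1 := by
  classical
  borelize H
  have hξm : Measurable ξ := hξ.measurable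
  have hξX1 : StronglyMeasurable (fun ω => ξ (X 1 ω)) := hξ.comp_measurable (hXmeas 1)
  have hξint : Integrable (fun ω => ξ (X 1 ω)) P := by
    refine Integrable.mono' ((integrable_const (1 : ℝ)).add hnormsq_int)
      hξX1.aestronglyMeasurable (ae_of_all _ fun ω => ?_)
    simp only [Pi.add_apply]
    nlinarith [norm_nonneg (ξ (X 1 ω)), sq_nonneg (‖ξ (X 1 ω)‖ - 1)]
  set μH : H := ∫ ω, ξ (X 1 ω) ∂P with hμH
  set m : ℝ := ∫ ω, M (X 1 ω) ∂P with hmdef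
  have hm : 0 < m := by
    rw [hmdef, integral_pos_iff_support_of_nonneg (fun ω => (hMpos _).le) hM_int]
    have hsupp : Function.support (fun ω => M (X 1 ω)) = Set.univ := by
      ext ω; simp [Function.support, (hMpos (X 1 ω)).ne']
    rw [hsupp]
    simp
  have hgs_eq : ∀ x, gstar x = ⟪μH, ξ x⟫ / m := by
    intro x
    rw [hgstar x]
    congr 1
    calc ∫ ω, ⟪ξ (X 1 ω), ξ x⟫ ∂P = ∫ ω, ⟪ξ x, ξ (X 1 ω)⟫ ∂P := by
          simp_rw [real_inner_comm]
      _ = ⟪ξ x, μH⟫ := integral_inner hξint (ξ x)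
      _ = ⟪μH, ξ x⟫ := real_inner_comm _ _
  have hgsm : Measurable gstar := by
    have heq : gstar = fun x => ⟪μH, ξ x⟫ / m := funext hgs_eq
    rw [heq]
    exact ((Continuous.inner continuous_const continuous_id).measurable.comp hξm).div_const m
  have hnorm_le : ∀ x : 𝒳, ‖ξ x‖ ≤ 1 + ‖ξ x‖ ^ 2 := fun x => by
    nlinarith [norm_nonneg (ξ x), sq_nonneg (‖ξ x‖ - 1)]
  have hgs_bound0 : ∀ x, |gstar x| ≤ (‖μH‖ / m) * ‖ξ x‖ := by
    intro x
    calc |gstar x| = |⟪μH, ξ x⟫| / m := by rw [hgs_eq, abs_div, abs_of_pos hm]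
      _ ≤ (‖μH‖ * ‖ξ x‖) / m := (div_le_div_iff_of_pos_right hm).2 (abs_real_inner_le_norm _ _)
      _ = (‖μH‖ / m) * ‖ξ x‖ := by ring
  have hgs_bound : ∀ x, |gstar x| ≤ (‖μH‖ / m) * (1 + ‖ξ x‖ ^ 2) := by
    intro x
    refine (hgs_bound0 x).trans ?_
    exact mul_le_mul_of_nonneg_left (hnorm_le x) (by positivity)
  have hgs_int : Integrable (fun ω => gstar (X 1 ω)) P := by
    refine Integrable.mono' (((integrable_const (1 : ℝ)).add hnormsq_int).const_mul (‖μH‖ / m))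
      ((hgsm.comp (hXmeas 1)).aestronglyMeasurable) (ae_of_all _ fun ω => ?_)
    simp only [Pi.add_apply]
    rw [Real.norm_eq_abs]
    exact hgs_bound _
  have hgs_sq_int : Integrable (fun ω => gstar (X 1 ω) ^ 2) P := by
    refine Integrable.mono' (((integrable_const (1 : ℝ)).add hnormsq_int).const_mul
        ((‖μH‖ / m) ^ 2))
      (((hgsm.comp (hXmeas 1)).pow_const 2).aestronglyMeasurable) (ae_of_all _ fun ω => ?_)
    simp only [Pi.add_apply]
    rw [Real.norm_eq_abs, abs_pow]
    calc |gstar (X 1 ω)| ^ 2 ≤ ((‖μH‖ / m) * ‖ξ (X 1 ω)‖) ^ 2 := by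
          have := hgs_bound0 (X 1 ω)
          have h0 : (0:ℝ) ≤ |gstar (X 1 ω)| := abs_nonneg _
          nlinarith
      _ = (‖μH‖ / m) ^ 2 * ‖ξ (X 1 ω)‖ ^ 2 := by ring
      _ ≤ (‖μH‖ / m) ^ 2 * (1 + ‖ξ (X 1 ω)‖ ^ 2) := by
          refine mul_le_mul_of_nonneg_left (by linarith [sq_nonneg ‖ξ (X 1 ω)‖]) (by positivity)
  set s : ℝ := ∫ ω', gstar (X 1 ω') ∂P with hsdef
  set v : ℝ := ∫ ω', gstar (X 1 ω') ^ 2 ∂P with hvdef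
  have hspos : 0 < s := hpos
  have hv0 : (0:ℝ) ≤ v := integral_nonneg fun ω => sq_nonneg _
  have hv : 0 < v := by
    rcases hv0.lt_or_eq with h | h
    · exact h
    exfalso
    have hz : (fun ω => gstar (X 1 ω) ^ 2) =ᵐ[P] 0 := by
      rw [← integral_eq_zero_iff_of_nonneg (fun ω => sq_nonneg _) hgs_sq_int]
      exact h.symm
    have hz' : (fun ω => gstar (X 1 ω)) =ᵐ[P] 0 := by
      filter_upwards [hz] with ω hω
      have hω' : gstar (X 1 ω) ^ 2 = 0 := hω
      have := (pow_eq_zero_iff (by norm_num : (2:ℕ) ≠ 0)).1 hω'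
      simpa using this
    have hs0 : s = 0 := by
      rw [hsdef, integral_congr_ae hz']
      simp
    rw [hs0] at hspos
    exact lt_irrefl 0 hspos
  have hsv : 0 < s + v := by linarith
  have hpt : s / (s + v) ∈ Set.Ioo (0 : ℝ) 1 :=
    ⟨div_pos hspos hsv, (div_lt_one hsv).2 (by linarith)⟩
  refine ⟨?_, hpt⟩
  -- iid structure of shifted sequence
  have hident : ∀ i : ℕ, IdentDistrib (X (1 + i)) (X 1) P P := fun i =>
    ⟨(hXmeas _).aemeasurable, (hXmeas 1).aemeasurable, hXident _⟩
  have hindepX : ∀ i j : ℕ, i ≠ j → IndepFun (X (1 + i)) (X (1 + j)) P :=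
    fun i j hij => hXindep.indepFun (by omega)
  set q : ℝ := ∫ ω, (1 + ‖ξ (X 1 ω)‖ ^ 2) ∂P with hqdef
  have E1 : ∀ᵐ ω ∂P, Tendsto (fun n : ℕ => (n : ℝ)⁻¹ • ∑ i ∈ Finset.range n, ξ (X (1 + i) ω))
      atTop (𝓝 μH) := by
    exact strong_law_ae (μ := P) (fun i ω => ξ (X (1 + i) ω)) hξint
      (fun i j hij => (hindepX i j hij).comp hξm hξm)
      (fun i => (hident i).comp hξm)
  have E2 : ∀ᵐ ω ∂P, Tendsto (fun n : ℕ => (∑ i ∈ Finset.range n, M (X (1 + i) ω)) / (n:ℝ))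
      atTop (𝓝 m) := by
    exact strong_law_ae_real (fun i ω => M (X (1 + i) ω)) hM_int
      (fun i j hij => (hindepX i j hij).comp hMmeas hMmeas)
      (fun i => (hident i).comp hMmeas)
  have hF3 : Measurable fun x : 𝒳 => 1 + ‖ξ x‖ ^ 2 :=
    measurable_const.add (hξm.norm.pow_const 2)
  have E3 : ∀ᵐ ω ∂P, Tendsto (fun n : ℕ =>
      (∑ i ∈ Finset.range n, (1 + ‖ξ (X (1 + i) ω)‖ ^ 2)) / (n:ℝ)) atTop (𝓝 q) := by
    exact strong_law_ae_real (fun i ω => 1 + ‖ξ (X (1 + i) ω)‖ ^ 2)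
      ((integrable_const (1 : ℝ)).add hnormsq_int)
      (fun i j hij => (hindepX i j hij).comp hF3 hF3)
      (fun i => (hident i).comp hF3)
  have E4 : ∀ᵐ ω ∂P, Tendsto (fun n : ℕ =>
      (∑ i ∈ Finset.range n, gstar (X (1 + i) ω)) / (n:ℝ)) atTop (𝓝 s) := by
    exact strong_law_ae_real (fun i ω => gstar (X (1 + i) ω)) hgs_int
      (fun i j hij => (hindepX i j hij).comp hgsm hgsm)
      (fun i => (hident i).comp hgsm)
  have E5 : ∀ᵐ ω ∂P, Tendsto (fun n : ℕ =>
      (∑ i ∈ Finset.range n, gstar (X (1 + i) ω) ^ 2) / (n:ℝ)) atTop (𝓝 v) := by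
    exact strong_law_ae_real (fun i ω => gstar (X (1 + i) ω) ^ 2) hgs_sq_int
      (fun i j hij => (hindepX i j hij).comp (hgsm.pow_const 2) (hgsm.pow_const 2))
      (fun i => (hident i).comp (hgsm.pow_const 2))
  filter_upwards [E1, E2, E3, E4, E5] with ω h1 h2 h3 h4 h5
  have h2' : Tendsto (fun n : ℕ => (n : ℝ)⁻¹ * ∑ i ∈ Finset.range n, M (X (1 + i) ω))
      atTop (𝓝 m) := by simpa only [div_eq_inv_mul] using h2
  have h3' : Tendsto (fun n : ℕ => (n : ℝ)⁻¹ *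
      ∑ i ∈ Finset.range n, (1 + ‖ξ (X (1 + i) ω)‖ ^ 2)) atTop (𝓝 q) := by
    simpa only [div_eq_inv_mul] using h3
  have h4' : Tendsto (fun n : ℕ => (n : ℝ)⁻¹ *
      ∑ i ∈ Finset.range n, ⟪μH, ξ (X (1 + i) ω)⟫ / m) atTop (𝓝 s) := by
    have := h4
    simp only [hgs_eq, div_eq_inv_mul] at this
    simpa only [div_eq_inv_mul] using this
  have h5' : Tendsto (fun n : ℕ => (n : ℝ)⁻¹ *
      ∑ i ∈ Finset.range n, (⟪μH, ξ (X (1 + i) ω)⟫ / m) ^ 2) atTop (𝓝 v) := by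
    have := h5
    simp only [hgs_eq] at this
    simpa only [div_eq_inv_mul] using this
  obtain ⟨hS, hV⟩ := lbow_det (fun i => ξ (X (1 + i) ω)) (fun i => M (X (1 + i) ω))
    (fun i => hMpos _) μH m s v q hm h1 h2' h3' h4' h5'
  have hSeq : ∀ t : ℕ, (1 / (t : ℝ)) * ∑ i ∈ Finset.Icc 1 t, g i ω (X i ω)
      = (t : ℝ)⁻¹ * ∑ j ∈ Finset.range t,
        (∑ k ∈ Finset.range j, ⟪ξ (X (1 + k) ω), ξ (X (1 + j) ω)⟫) /
          (∑ k ∈ Finset.range j, M (X (1 + k) ω)) := by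
    intro t
    rw [one_div, sum_Icc_one]
    congr 1
    refine Finset.sum_congr rfl fun j _ => ?_
    rw [hg]
    have hj : 1 + j - 1 = j := by omega
    rw [hj, sum_Icc_one, sum_Icc_one]
  have hSeq2 : ∀ t : ℕ, (1 / (t : ℝ)) * ∑ i ∈ Finset.Icc 1 t, (g i ω (X i ω)) ^ 2
      = (t : ℝ)⁻¹ * ∑ j ∈ Finset.range t,
        ((∑ k ∈ Finset.range j, ⟪ξ (X (1 + k) ω), ξ (X (1 + j) ω)⟫) /
          (∑ k ∈ Finset.range j, M (X (1 + k) ω))) ^ 2 := by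
    intro t
    rw [one_div, sum_Icc_one]
    congr 1
    refine Finset.sum_congr rfl fun j _ => ?_
    rw [hg]
    have hj : 1 + j - 1 = j := by omega
    rw [hj, sum_Icc_one, sum_Icc_one]
  have hW := hS.div (hS.add hV) hsv.ne'
  have hmax := (tendsto_const_nhds : Tendsto (fun _ : ℕ => (0:ℝ)) atTop (𝓝 0)).max hW
  rw [max_eq_right hpt.1.le] at hmax
  have hshift : Tendsto (fun t : ℕ => lam (t + 1) ω) atTop (𝓝 (s / (s + v))) := by
    refine hmax.congr' ?_
    filter_upwards [eventually_ge_atTop 1] with t ht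
    rw [hlam_rec t ht ω, hSeq t, hSeq2 t]
    simp only [Pi.div_apply]
  exact (tendsto_add_atTop_iff_nat 1).1 hshift
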